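/- arXiv:2604.11227 — 2 statements merged into one kernel-verified Lean document; each statement's English description precedes it below -/
import Mathlib

section
/- Let ρ_ℓ and ρ_u be square-integrable real random variables with means r_ℓ, r_u and second moments ν_ℓ, ν_u, and suppose ρ_ℓ and ρ_u are independent with r_ℓ > r_u. If (r_ℓ - r_u)² ≥ ((1-ε)/ε)·(ν_ℓ + ν_u - r_ℓ² - r_u²) for some 0 < ε < 1, then Pr[ρ_ℓ - ρ_u ≤ 0] ≤ ε. -/
open MeasureTheory ProbabilityTheory

/-- Proposition 1 (sufficient condition for ε-separation): for independent square-integrable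
ρℓ, ρu with means rℓ > ru and second moments νℓ, νu, if
(rℓ - ru)² ≥ ((1-ε)/ε)(νℓ + νu - rℓ² - ru²) for some 0 < ε < 1, then Pr[ρℓ - ρu ≤ 0] ≤ ε. -/
theorem epsilon_separation_sufficient {Ω : Type*} [MeasurableSpace Ω] (P : Measure Ω)
    [IsProbabilityMeasure P] (ρℓ ρu : Ω → ℝ)
    (hρℓ : MemLp ρℓ 2 P) (hρu : MemLp ρu 2 P)
    (hind : IndepFun ρℓ ρu P)
    (rℓ ru νℓ νu ε : ℝ)
    (hrℓ : (∫ ω, ρℓ ω ∂P) = rℓ) (hru : (∫ ω, ρu ω ∂P) = ru)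
    (hνℓ : (∫ ω, (ρℓ ω) ^ 2 ∂P) = νℓ) (hνu : (∫ ω, (ρu ω) ^ 2 ∂P) = νu)
    (horder : ru < rℓ) (hε0 : 0 < ε) (hε1 : ε < 1)
    (hcond : (rℓ - ru) ^ 2 ≥ ((1 - ε) / ε) * (νℓ + νu - rℓ ^ 2 - ru ^ 2)) :
    P {ω | ρℓ ω - ρu ω ≤ 0} ≤ ENNReal.ofReal ε := by
  set V : Ω → ℝ := fun ω => ρℓ ω - ρu ω with hVdef
  have hV : MemLp V 2 P := hρℓ.sub hρu
  set m : ℝ := rℓ - ru with hmdef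
  have hm : 0 < m := sub_pos.mpr horder
  set σ2 : ℝ := variance V P with hσdef
  have hσ0 : 0 ≤ σ2 := variance_nonneg _ _
  -- variance of the difference via independence
  have hvar : σ2 = (νℓ - rℓ ^ 2) + (νu - ru ^ 2) := by
    have hVeq : V = ρℓ + (-ρu) := by funext ω; simp [hVdef, sub_eq_add_neg]
    have hindneg : IndepFun ρℓ (-ρu) P := hind.neg_right
    have h1 : variance V P = variance ρℓ P + variance (-ρu) P := by
      rw [hVeq]; exact hindneg.variance_add hρℓ hρu.neg
    have h2 : variance (-ρu) P = variance ρu P := by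
      have : (-ρu) = fun ω => (-1 : ℝ) * ρu ω := by funext ω; simp
      rw [this, variance_const_mul]; ring
    have h3 : variance ρℓ P = νℓ - rℓ ^ 2 := by
      rw [variance_eq_sub hρℓ]
      simp only [Pi.pow_apply] at *
      rw [hνℓ, hrℓ]
    have h4 : variance ρu P = νu - ru ^ 2 := by
      rw [variance_eq_sub hρu]
      simp only [Pi.pow_apply] at *
      rw [hνu, hru]
    rw [hσdef, h1, h2, h3, h4]
  -- mean and second moment of V
  have hEV : (∫ ω, V ω ∂P) = m := by
    rw [hVdef]
    rw [integral_sub (hρℓ.integrable one_le_two) (hρu.integrable one_le_two), hrℓ, hru]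
  have hEV2 : (∫ ω, (V ω) ^ 2 ∂P) = σ2 + m ^ 2 := by
    have := variance_eq_sub hV
    simp only [Pi.pow_apply] at this
    rw [hσdef, this, hEV]; ring
  -- Cantelli setup
  set u : ℝ := σ2 / m with hudef
  have hu0 : 0 ≤ u := div_nonneg hσ0 hm.le
  set c : ℝ := u + m with hcdef
  have hc0 : 0 < c := by positivity
  set W : Ω → ℝ := fun ω => (c - V ω) ^ 2 with hWdef
  have hWmem : MemLp (fun ω => c - V ω) 2 P := (memLp_const c).sub hV
  have hWint : Integrable W P := hWmem.integrable_sq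
  have hEW : (∫ ω, W ω ∂P) = u ^ 2 + σ2 := by
    have hexp : ∀ ω, W ω = c ^ 2 - (2 * c) * V ω + (V ω) ^ 2 := by
      intro ω; simp only [hWdef]; ring
    rw [integral_congr_ae (Filter.Eventually.of_forall hexp)]
    have i1 : Integrable (fun ω => c ^ 2 - 2 * c * V ω) P :=
      (integrable_const (c ^ 2)).sub ((hV.integrable one_le_two).const_mul (2 * c))
    rw [integral_add i1 hV.integrable_sq]
    rw [integral_sub (integrable_const (c ^ 2)) ((hV.integrable one_le_two).const_mul (2 * c))]
    rw [integral_const_mul, hEV, hEV2]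
    simp only [integral_const, measure_univ, ENNReal.toReal_one, probReal_univ, smul_eq_mul, one_mul]
    rw [hcdef]; ring
  -- Markov's inequality
  have hmarkov : c ^ 2 * (P {ω | c ^ 2 ≤ W ω}).toReal ≤ u ^ 2 + σ2 := by
    rw [← hEW]
    exact mul_meas_ge_le_integral_of_nonneg
      (Filter.Eventually.of_forall fun ω => sq_nonneg _) hWint _
  -- event inclusion
  have hsubset : {ω | ρℓ ω - ρu ω ≤ 0} ⊆ {ω | c ^ 2 ≤ W ω} := by
    intro ω hω
    simp only [Set.mem_setOf_eq] at hω ⊢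
    have hVω : V ω ≤ 0 := hω
    have : c ≤ c - V ω := by linarith
    calc c ^ 2 ≤ (c - V ω) ^ 2 := by nlinarith
    _ = W ω := rfl
  clear_value V m σ2 u c W
  -- put together
  have hfin : P {ω | c ^ 2 ≤ W ω} ≠ ⊤ := measure_ne_top _ _
  have hle : (P {ω | ρℓ ω - ρu ω ≤ 0}).toReal ≤ ε := by
    have h1 : (P {ω | ρℓ ω - ρu ω ≤ 0}).toReal ≤ (P {ω | c ^ 2 ≤ W ω}).toReal :=
      ENNReal.toReal_mono hfin (measure_mono hsubset)
    have h2 : (P {ω | c ^ 2 ≤ W ω}).toReal ≤ (u ^ 2 + σ2) / c ^ 2 := by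
      rw [le_div_iff₀ (by positivity)]
      linarith [hmarkov]
    have h3 : (u ^ 2 + σ2) / c ^ 2 ≤ ε := by
      rw [div_le_iff₀ (by positivity)]
      -- c = σ2/m + m, so ε c² - (u² + σ2) = (σ2+m²)/m² · (ε(σ2+m²) - σ2)
      have hcond' : ε * m ^ 2 ≥ (1 - ε) * σ2 := by
        have : m ^ 2 ≥ ((1 - ε) / ε) * σ2 := by
          rw [hvar]
          calc ((1 - ε) / ε) * ((νℓ - rℓ ^ 2) + (νu - ru ^ 2)) =
              ((1 - ε) / ε) * (νℓ + νu - rℓ ^ 2 - ru ^ 2) := by ring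
          _ ≤ m ^ 2 := hcond
        have := mul_le_mul_of_nonneg_left this hε0.le
        calc (1 - ε) * σ2 = ε * (((1 - ε) / ε) * σ2) := by field_simp
        _ ≤ ε * m ^ 2 := by linarith
      have hceq : c = (σ2 + m ^ 2) / m := by rw [hcdef, hudef]; field_simp
      have hueq : u * m = σ2 := by rw [hudef]; field_simp
      have hσm : 0 < σ2 + m ^ 2 := by positivity
      -- ε c² ≥ u² + σ2  ⟺  ε (σ2+m²)² ≥ (u²+σ2) m² = σ2(σ2+m²)
      have key : σ2 * (σ2 + m ^ 2) ≤ ε * (σ2 + m ^ 2) ^ 2 := by nlinarith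
      have hm2 : (0:ℝ) < m ^ 2 := by positivity
      show u ^ 2 + σ2 ≤ ε * c ^ 2
      rw [← sub_nonneg]
      have heq : ε * c ^ 2 - (u ^ 2 + σ2) =
          (ε * (σ2 + m ^ 2) ^ 2 - σ2 * (σ2 + m ^ 2)) / m ^ 2 := by
        rw [hceq, hudef]
        field_simp
      rw [heq]
      exact div_nonneg (by linarith) hm2.le
    linarith
  calc P {ω | ρℓ ω - ρu ω ≤ 0} = ENNReal.ofReal (P {ω | ρℓ ω - ρu ω ≤ 0}).toReal :=
    (ENNReal.ofReal_toReal (measure_ne_top _ _)).symm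
  _ ≤ ENNReal.ofReal ε := ENNReal.ofReal_le_ofReal hle
end

section
/- Let θ ~ N(μ, σ²) and φ ~ N(ξ, ς²) be independent Gaussian random variables, let a(θ,φ) = (sin θ cos φ, sin θ sin φ, cos θ), and let R(α,β,γ) be the Euler rotation. Then the expected first coordinate of Rᵀa equals cos β · sin(μ)e^{-σ²/2} · cos(ξ - α)e^{-ς²/2} − sin β · cos(μ)e^{-σ²/2}. -/
open MeasureTheory ProbabilityTheory Real Matrix
open scoped NNReal

lemma centered_cexp (v : ℝ≥0) (hv : v ≠ 0) :
    ∫ x : ℝ, Complex.exp (x * Complex.I) ∂(gaussianReal 0 v) =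
      Complex.exp (-(v : ℝ) / 2) := by
  have hvpos : (0 : ℝ) < v := lt_of_le_of_ne v.coe_nonneg (by exact_mod_cast (Ne.symm hv))
  rw [gaussianReal_of_var_ne_zero 0 hv, gaussianPDF_def]
  simp_rw [ENNReal.ofReal]
  rw [integral_withDensity_eq_integral_smul
    (f := fun x => (gaussianPDFReal 0 v x).toNNReal) ((measurable_gaussianPDFReal 0 v).real_toNNReal)
    (fun x : ℝ => Complex.exp (x * Complex.I))]
  have hsmul : ∀ x : ℝ, (gaussianPDFReal 0 v x).toNNReal • Complex.exp (x * Complex.I)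
      = (gaussianPDFReal 0 v x : ℂ) * Complex.exp (x * Complex.I) := by
    intro x
    rw [NNReal.smul_def, Real.coe_toNNReal _ (gaussianPDFReal_nonneg 0 v x)]
    simp [Complex.real_smul]
  simp_rw [hsmul, gaussianPDFReal]
  push_cast
  have hb : (0:ℝ) < 1/(2*(v:ℝ)) := by positivity
  have key := fourierIntegral_gaussian (b := ((1/(2*(v:ℝ)) : ℝ) : ℂ)) (by simpa using hb) 1
  have heq : ∀ x : ℝ, ((Real.sqrt (2*π*v))⁻¹ : ℂ) * Complex.exp (-((x:ℂ)-0)^2/(2*v))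
        * Complex.exp (x * Complex.I)
      = ((Real.sqrt (2*π*v))⁻¹ : ℂ) *
        (Complex.exp (Complex.I * 1 * x) * Complex.exp (-(((1/(2*(v:ℝ)) : ℝ) : ℂ)) * x^2)) := by
    intro x
    have hv2 : ((v:ℂ)) ≠ 0 := by exact_mod_cast (by exact_mod_cast hv : ((v:ℝ)) ≠ 0)
    rw [mul_assoc]
    congr 1
    rw [← Complex.exp_add, ← Complex.exp_add]
    push_cast
    field_simp
    ring
  calc ∫ x : ℝ, ((Real.sqrt (2*π*v))⁻¹ : ℂ) * Complex.exp (-((x:ℂ)-0)^2/(2*v))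
        * Complex.exp (x * Complex.I)
      = ((Real.sqrt (2*π*v))⁻¹ : ℂ) *
        ∫ x : ℝ, Complex.exp (Complex.I * 1 * x) *
          Complex.exp (-(((1/(2*(v:ℝ)) : ℝ) : ℂ)) * x^2) := by
        simp_rw [heq]; rw [integral_const_mul]
    _ = Complex.exp (-(v : ℝ) / 2) := by
        rw [key]
        have h1 : ((π : ℂ) / ((1/(2*(v:ℝ)) : ℝ) : ℂ)) = ((2*π*(v:ℝ) : ℝ) : ℂ) := by
          push_cast
          field_simp
        have h2 : ((2*π*(v:ℝ) : ℝ) : ℂ) ^ (1/2 : ℂ) = (Real.sqrt (2*π*(v:ℝ)) : ℂ) := by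
          rw [Real.sqrt_eq_rpow, Complex.ofReal_cpow (by positivity)]
          norm_num
        have h3 : -(1:ℂ)^2/(4 * ((1/(2*(v:ℝ)) : ℝ) : ℂ)) = -((v:ℝ):ℂ)/2 := by
          push_cast
          have hv2 : ((v:ℂ)) ≠ 0 := by exact_mod_cast (by exact_mod_cast hv : ((v:ℝ)) ≠ 0)
          field_simp
          ring
        rw [h1, h2, h3]
        rw [← mul_assoc]
        have hs : (Real.sqrt (2*π*(v:ℝ)) : ℂ) ≠ 0 := by
          exact_mod_cast Real.sqrt_ne_zero'.mpr (by positivity)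
        rw [inv_mul_cancel₀ hs, one_mul]

lemma gauss_cexp (μ : ℝ) (v : ℝ≥0) :
    ∫ x : ℝ, Complex.exp (x * Complex.I) ∂(gaussianReal μ v) =
      Complex.exp (μ * Complex.I) * (Real.exp (-(v : ℝ) / 2) : ℂ) := by
  by_cases hv : v = 0
  · subst hv
    rw [gaussianReal_zero_var, integral_dirac]
    simp
  · have hmap : (gaussianReal 0 v).map (· + μ) = gaussianReal μ v := by
      simpa using gaussianReal_map_add_const (μ := 0) (v := v) μ
    have hm : Measurable fun x : ℝ => Complex.exp (x * Complex.I) := by measurability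
    rw [← hmap, integral_map (by fun_prop) hm.aestronglyMeasurable]
    have : ∀ x : ℝ, Complex.exp (↑(x + μ) * Complex.I)
        = Complex.exp (μ * Complex.I) * Complex.exp (x * Complex.I) := by
      intro x
      rw [← Complex.exp_add]
      push_cast
      ring_nf
    simp_rw [this]
    rw [integral_const_mul, centered_cexp v hv]
    congr 1
    rw [Complex.ofReal_exp]
    push_cast
    ring_nf

lemma integrable_cexp_I (μ : ℝ) (v : ℝ≥0) :
    Integrable (fun x : ℝ => Complex.exp (x * Complex.I)) (gaussianReal μ v) := by
  have hm : Measurable fun x : ℝ => Complex.exp (x * Complex.I) := by measurability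
  refine Integrable.mono' (integrable_const 1) hm.aestronglyMeasurable ?_
  filter_upwards with x
  simp [Complex.norm_exp]

lemma gauss_cos (μ : ℝ) (v : ℝ≥0) :
    ∫ x : ℝ, Real.cos x ∂(gaussianReal μ v) = Real.cos μ * Real.exp (-(v : ℝ) / 2) := by
  have h := gauss_cexp μ v
  have hre := integral_re (integrable_cexp_I μ v)
  rw [h] at hre
  simp only [RCLike.re_to_complex] at hre
  have h1 : ∀ x : ℝ, (Complex.exp (↑x * Complex.I)).re = Real.cos x := fun x =>
    Complex.exp_ofReal_mul_I_re x
  simp_rw [h1] at hre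
  rw [hre]
  simp [Complex.mul_re, -Complex.ofReal_exp, Complex.exp_ofReal_mul_I_re, Complex.exp_ofReal_mul_I_im]

lemma gauss_sin (μ : ℝ) (v : ℝ≥0) :
    ∫ x : ℝ, Real.sin x ∂(gaussianReal μ v) = Real.sin μ * Real.exp (-(v : ℝ) / 2) := by
  have h := gauss_cexp μ v
  have him := integral_im (integrable_cexp_I μ v)
  rw [h] at him
  simp only [RCLike.im_to_complex] at him
  have h1 : ∀ x : ℝ, (Complex.exp (↑x * Complex.I)).im = Real.sin x := fun x =>
    Complex.exp_ofReal_mul_I_im x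
  simp_rw [h1] at him
  rw [him]
  simp [Complex.mul_im, -Complex.ofReal_exp, Complex.exp_ofReal_mul_I_re, Complex.exp_ofReal_mul_I_im]

/-- Rotation by α about the Z-axis. -/
noncomputable def rotZ (α : ℝ) : Matrix (Fin 3) (Fin 3) ℝ :=
  !![Real.cos α, -Real.sin α, 0; Real.sin α, Real.cos α, 0; 0, 0, 1]

/-- Rotation by β about the Y-axis. -/
noncomputable def rotY (β : ℝ) : Matrix (Fin 3) (Fin 3) ℝ :=
  !![Real.cos β, 0, Real.sin β; 0, 1, 0; -Real.sin β, 0, Real.cos β]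

/-- Rotation by γ about the X-axis. -/
noncomputable def rotX (γ : ℝ) : Matrix (Fin 3) (Fin 3) ℝ :=
  !![1, 0, 0; 0, Real.cos γ, -Real.sin γ; 0, Real.sin γ, Real.cos γ]

/-- ZYX Euler rotation matrix R(α, β, γ). -/
noncomputable def eulerRot (α β γ : ℝ) : Matrix (Fin 3) (Fin 3) ℝ :=
  rotZ α * rotY β * rotX γ

/-- Unit direction vector with elevation θ and azimuth φ. -/
noncomputable def sphDir (θ φ : ℝ) : Fin 3 → ℝ :=
  ![Real.sin θ * Real.cos φ, Real.sin θ * Real.sin φ, Real.cos θ]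


/-- For independent θ ~ N(μ, σ²), φ ~ N(ξ, ς²), the expected first coordinate of
Rᵀ(α,β,γ)·a(θ,φ) equals cos β · sin(μ)e^{-σ²/2} · cos(ξ-α)e^{-ς²/2}
− sin β · cos(μ)e^{-σ²/2}. -/
theorem expected_first_coordinate_rotated (μ ξ : ℝ) (σ ς : ℝ≥0) (α β γ : ℝ) :
    (∫ x, ((eulerRot α β γ)ᵀ.mulVec (sphDir x.1 x.2)) 0
        ∂((gaussianReal μ (σ ^ 2)).prod (gaussianReal ξ (ς ^ 2))))
      = Real.cos β * (Real.sin μ * Real.exp (-(σ : ℝ) ^ 2 / 2))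
          * (Real.cos (ξ - α) * Real.exp (-(ς : ℝ) ^ 2 / 2))
        - Real.sin β * (Real.cos μ * Real.exp (-(σ : ℝ) ^ 2 / 2)) := by
  set m : Measure (ℝ × ℝ) := (gaussianReal μ (σ ^ 2)).prod (gaussianReal ξ (ς ^ 2)) with hm
  have hpt : ∀ x : ℝ × ℝ, ((eulerRot α β γ)ᵀ.mulVec (sphDir x.1 x.2)) 0
      = Real.cos α * Real.cos β * (Real.sin x.1 * Real.cos x.2)
        + Real.sin α * Real.cos β * (Real.sin x.1 * Real.sin x.2)
        + (-Real.sin β) * (Real.cos x.1 * 1) := by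
    intro x
    simp [eulerRot, rotZ, rotY, rotX, sphDir, Matrix.mulVec, dotProduct,
      Fin.sum_univ_three, Matrix.transpose_apply, Matrix.mul_apply]
  simp_rw [hpt]
  have hint : ∀ (f g : ℝ → ℝ), Measurable f → Measurable g →
      (∀ y, |f y| ≤ 1) → (∀ y, |g y| ≤ 1) →
      Integrable (fun x : ℝ × ℝ => f x.1 * g x.2) m := by
    intro f g hf hg hfb hgb
    refine Integrable.mono' (integrable_const 1) ((hf.comp measurable_fst).mul (hg.comp measurable_snd)).aestronglyMeasurable ?_
    filter_upwards with x
    rw [Real.norm_eq_abs, abs_mul]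
    calc |f x.1| * |g x.2| ≤ 1 * 1 := mul_le_mul (hfb _) (hgb _) (abs_nonneg _) one_pos.le
      _ = 1 := one_mul 1
  have h1 : Integrable (fun x : ℝ × ℝ => Real.sin x.1 * Real.cos x.2) m :=
    hint _ _ Real.measurable_sin Real.measurable_cos
      (fun y => Real.abs_sin_le_one y) (fun y => Real.abs_cos_le_one y)
  have h2 : Integrable (fun x : ℝ × ℝ => Real.sin x.1 * Real.sin x.2) m :=
    hint _ _ Real.measurable_sin Real.measurable_sin
      (fun y => Real.abs_sin_le_one y) (fun y => Real.abs_sin_le_one y)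
  have h3 : Integrable (fun x : ℝ × ℝ => Real.cos x.1 * 1) m :=
    hint _ _ Real.measurable_cos measurable_const
      (fun y => Real.abs_cos_le_one y) (fun y => by norm_num)
  have hA : Integrable (fun x : ℝ × ℝ => Real.cos α * Real.cos β * (Real.sin x.1 * Real.cos x.2)
      + Real.sin α * Real.cos β * (Real.sin x.1 * Real.sin x.2)) m :=
    (h1.const_mul _).add (h2.const_mul _)
  rw [integral_add hA (h3.const_mul _),
    integral_add (h1.const_mul _) (h2.const_mul _),
    integral_const_mul, integral_const_mul, integral_const_mul,
    hm, integral_prod_mul, integral_prod_mul,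
    integral_prod_mul (f := fun x => Real.cos x) (g := fun _ => (1:ℝ)),
    gauss_sin, gauss_cos, gauss_cos, gauss_sin, integral_const]
  have hσ : ((σ ^ 2 : ℝ≥0) : ℝ) = (σ : ℝ) ^ 2 := by push_cast; ring_nf
  have hς : ((ς ^ 2 : ℝ≥0) : ℝ) = (ς : ℝ) ^ 2 := by push_cast; ring_nf
  rw [hσ, hς]
  simp [Real.cos_sub]
  ring
end
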